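/- Let u ∈ ℝ^{n+1} be a unit vector with all entries nonzero, let x₀ > 0, and let y : ℝ → ℝ be a function such that Φ_u(x, y(x)) = 0 for all x in some neighborhood of x₀ contained in (0, ∞), and such that y has derivative d at x₀. Then d ≤ (−y(x₀) + x₀² + y(x₀)²)/x₀. -/

import Mathlib

/-- The continuous inverse cotangent with range `(0, π)`. -/
noncomputable def arccot (θ : ℝ) : ℝ := Real.pi / 2 - Real.arctan θ

/-- The lifting `Φ_u(x, y)` of the argument of `F_u(x + iy)` (for `x > 0`). -/
noncomputable def Phi {m : ℕ} (u : Fin m → ℝ) (x y : ℝ) : ℝ :=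
  x * ∑ j, u j
    - ∑ j ∈ Finset.univ.filter (fun j => 0 < u j), arccot ((1 / u j - y) / x)
    + ∑ j ∈ Finset.univ.filter (fun j => u j < 0), arccot (-(1 / u j - y) / x)

lemma hasDerivAt_arccot (θ : ℝ) : HasDerivAt arccot (-(1 / (1 + θ ^ 2))) θ := by
  simpa [show arccot = fun θ => Real.pi / 2 - Real.arctan θ from rfl] using (Real.hasDerivAt_arctan θ).const_sub (Real.pi / 2)

theorem stmt17 (n : ℕ) (u : Fin (n + 1) → ℝ) (hu : ∑ j, (u j) ^ 2 = 1)
    (hnz : ∀ j, u j ≠ 0) (x₀ : ℝ) (hx₀ : 0 < x₀) (y : ℝ → ℝ) (d : ℝ)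
    (hnbhd : ∃ s ∈ nhds x₀, s ⊆ Set.Ioi (0 : ℝ) ∧ ∀ x ∈ s, Phi u x (y x) = 0)
    (hd : HasDerivAt y d x₀) :
    d ≤ (-(y x₀) + x₀ ^ 2 + (y x₀) ^ 2) / x₀ := by
  obtain ⟨s, hs, hspos, hzero⟩ := hnbhd
  have hx₀' : (x₀ : ℝ) ≠ 0 := ne_of_gt hx₀
  set Y := y x₀ with hY
  set a : Fin (n + 1) → ℝ := fun j => 1 / u j - Y with ha
  set q : Fin (n + 1) → ℝ := fun j => x₀ ^ 2 + (a j) ^ 2 with hq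
  have hqpos : ∀ j, 0 < q j := fun j => by positivity
  set t : Fin (n + 1) → ℝ := fun j => (d * x₀ + a j) / q j with ht
  -- derivative of the inner functions
  have hinner : ∀ j : Fin (n + 1), HasDerivAt (fun x => (1 / u j - y x) / x)
      (((0 - d) * x₀ - (1 / u j - y x₀) * 1) / x₀ ^ 2) x₀ := fun j =>
    ((hasDerivAt_const x₀ (1 / u j)).sub hd).div (hasDerivAt_id x₀) hx₀'
  have hone : ∀ j, 1 + ((1 / u j - Y) / x₀) ^ 2 = q j / x₀ ^ 2 := by
    intro j
    rw [hq, ha]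
    field_simp
  have hpos_term : ∀ j, HasDerivAt (fun x => arccot ((1 / u j - y x) / x)) (t j) x₀ := by
    intro j
    have h : HasDerivAt (fun x => arccot ((1 / u j - y x) / x))
        (-(1 / (1 + ((1 / u j - y x₀) / x₀) ^ 2))
          * (((0 - d) * x₀ - (1 / u j - y x₀) * 1) / x₀ ^ 2)) x₀ :=
      (hasDerivAt_arccot _).comp x₀ (hinner j)
    convert h using 1
    rw [ht, hone j]
    have := hqpos j
    rw [hY] at *
    field_simp
    ring
  have hneg_term : ∀ j, HasDerivAt (fun x => arccot (-(1 / u j - y x) / x)) (-(t j)) x₀ := by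
    intro j
    have hfun : (fun x => arccot (-(1 / u j - y x) / x))
        = fun x => Real.pi - arccot ((1 / u j - y x) / x) := by
      funext x
      simp only [arccot, neg_div]
      rw [Real.arctan_neg]
      ring
    rw [hfun]
    exact (hpos_term j).const_sub Real.pi
  -- derivative of the composite function
  set D : ℝ := (∑ j, u j) - (∑ j ∈ Finset.univ.filter (fun j => 0 < u j), t j)
      + (∑ j ∈ Finset.univ.filter (fun j => u j < 0), -(t j)) with hD
  have hsum : HasDerivAt (fun x => Phi u x (y x)) D x₀ := by
    have h1 : HasDerivAt (fun x : ℝ => x * ∑ j, u j) (∑ j, u j) x₀ := by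
      simpa using (hasDerivAt_id x₀).mul_const (∑ j, u j)
    have h2 := HasDerivAt.fun_sum (fun j (_ : j ∈ Finset.univ.filter (fun j => 0 < u j)) =>
      hpos_term j)
    have h3 := HasDerivAt.fun_sum (fun j (_ : j ∈ Finset.univ.filter (fun j => u j < 0)) =>
      hneg_term j)
    exact (h1.sub h2).add h3
  -- the derivative is zero
  have hD0 : D = 0 := by
    have hev : (fun _ : ℝ => (0 : ℝ)) =ᶠ[nhds x₀] fun x => Phi u x (y x) := by
      filter_upwards [hs] with x hx
      exact (hzero x hx).symm
    exact (hsum.congr_of_eventuallyEq hev).unique (hasDerivAt_const x₀ 0)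
  -- combine the two filtered sums
  have hfilter : Finset.univ.filter (fun j => ¬ 0 < u j)
      = Finset.univ.filter (fun j : Fin (n + 1) => u j < 0) := by
    apply Finset.filter_congr
    intro j _
    constructor
    · intro h; exact lt_of_le_of_ne (not_lt.1 h) (hnz j)
    · intro h; exact not_lt.2 h.le
  have hS : ∑ j, u j = ∑ j, t j := by
    have h := Finset.sum_filter_add_sum_filter_not Finset.univ (fun j => 0 < u j) t
    rw [hfilter] at h
    have := hD0
    rw [hD, Finset.sum_neg_distrib] at this
    linarith [h]
  -- split the sum
  have hsplit : ∑ j, t j = d * x₀ * (∑ j, 1 / q j) + ∑ j, a j / q j := by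
    rw [Finset.mul_sum, ← Finset.sum_add_distrib]
    apply Finset.sum_congr rfl
    intro j _
    rw [ht]
    have := hqpos j
    field_simp
  -- pointwise inequality
  have hu1 : ∀ j, u j ≤ 1 := by
    intro j
    have h1 : (u j) ^ 2 ≤ 1 := by
      rw [← hu]
      exact Finset.single_le_sum (fun i _ => sq_nonneg (u i)) (Finset.mem_univ j)
    nlinarith [sq_nonneg (u j - 1)]
  have key : ∀ j, u j - a j / q j ≤ (x₀ ^ 2 + Y ^ 2 - Y) / q j := by
    intro j
    have hqj := hqpos j
    have hid : u j * q j - a j - (x₀ ^ 2 + Y ^ 2 - Y) = (u j - 1) * (x₀ ^ 2 + Y ^ 2) := by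
      rw [hq, ha]
      field_simp [hnz j]
      ring
    have hxy : 0 < x₀ ^ 2 + Y ^ 2 := by positivity
    have h2 : u j * q j - a j ≤ x₀ ^ 2 + Y ^ 2 - Y := by
      nlinarith [hu1 j]
    have h3 : u j - a j / q j = (u j * q j - a j) / q j := by
      field_simp
    rw [h3]
    gcongr
  -- sum the inequality
  have hWpos : 0 < ∑ j, 1 / q j := by
    apply Finset.sum_pos
    · intro j _
      exact div_pos one_pos (hqpos j)
    · exact Finset.univ_nonempty
  have hsumkey : ∑ j, (u j - a j / q j) ≤ ∑ j, (x₀ ^ 2 + Y ^ 2 - Y) / q j :=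
    Finset.sum_le_sum (fun j _ => key j)
  have hleft : ∑ j, (u j - a j / q j) = d * x₀ * (∑ j, 1 / q j) := by
    rw [Finset.sum_sub_distrib]
    have := hS
    rw [hsplit] at this
    linarith
  have hright : ∑ j, (x₀ ^ 2 + Y ^ 2 - Y) / q j = (x₀ ^ 2 + Y ^ 2 - Y) * (∑ j, 1 / q j) := by
    rw [Finset.mul_sum]
    apply Finset.sum_congr rfl
    intro j _
    rw [mul_one_div]
  have hfinal : d * x₀ ≤ x₀ ^ 2 + Y ^ 2 - Y := by
    have := hsumkey
    rw [hleft, hright] at this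
    exact le_of_mul_le_mul_right this hWpos
  rw [le_div_iff₀ hx₀]
  linarith
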